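/- A polynomial f ∈ F_q[x], where q = p^r, is a permutation polynomial of every finite extension of F_q if and only if f(x) = a x^{p^h} + b for some a ≠ 0, b ∈ F_q, and nonnegative integer h. -/

import Mathlib

open Polynomial

/-- If `(X-1)^n = X^n - 1` over a finite field, then `n` is a power of the characteristic. -/
lemma aux_pow_char {F : Type*} [Field F] [Fintype F] {n : ℕ} (hn : n ≠ 0)
    (hkey : ((X : F[X]) - 1) ^ n = X ^ n - 1) : ∃ h : ℕ, n = ringChar F ^ h := by
  set p := ringChar F with hpdef
  haveI : CharP F p := ringChar.charP F
  have hp : p.Prime := CharP.char_is_prime F p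
  haveI : Fact p.Prime := ⟨hp⟩
  haveI : CharP F[X] p := Polynomial.instCharP p
  set h := n.factorization p with hh
  set m := n / p ^ h with hmdef
  have hfac : p ^ h * m = n := Nat.ordProj_mul_ordCompl_eq_self n p
  have hnd : ¬ p ∣ m := Nat.not_dvd_ordCompl hp hn
  clear_value h m
  refine ⟨h, ?_⟩
  suffices hm1 : m = 1 by rw [← hfac, hm1, mul_one]
  have hpe : ((X : F[X]) - 1) ^ m = X ^ m - 1 := by
    have e1 : (((X : F[X]) - 1) ^ m) ^ p ^ h = ((X : F[X]) ^ m - 1) ^ p ^ h := by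
      rw [← pow_mul, mul_comm m (p ^ h), hfac, hkey, sub_pow_char_pow, ← pow_mul,
        mul_comm m (p ^ h), hfac, one_pow]
    have e2 : ((((X : F[X]) - 1) ^ m) - ((X : F[X]) ^ m - 1)) ^ p ^ h = 0 := by
      rw [sub_pow_char_pow, e1, sub_self]
    have e3 := pow_eq_zero_iff (pow_ne_zero h hp.ne_zero) |>.mp e2
    exact sub_eq_zero.mp e3
  have hm0 : m ≠ 0 := by
    intro h0
    rw [h0, mul_zero] at hfac
    exact hn hfac.symm
  by_contra hm1
  have hm2 : 2 ≤ m := by omega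
  have hd := congrArg derivative hpe
  rw [derivative_pow, derivative_sub, derivative_X, derivative_one, sub_zero, mul_one,
    derivative_sub, derivative_X_pow, derivative_one, sub_zero] at hd
  have he := congrArg (eval 1) hd
  simp only [eval_mul, eval_pow, eval_sub, eval_X, eval_one, eval_C, sub_self] at he
  rw [zero_pow (by omega : m - 1 ≠ 0), mul_zero, one_pow, mul_one] at he
  have : (m : F) = 0 := he.symm
  exact hnd ((CharP.cast_eq_zero_iff F p m).mp this)

/-- The Frobenius-type map `c ↦ c ^ p ^ h` is bijective on a finite field of characteristic `p`. -/
lemma aux_frob_bij {E : Type*} [Field E] [Finite E] {p : ℕ} (hp : p.Prime) [CharP E p] (h : ℕ) :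
    Function.Bijective (fun c : E => c ^ p ^ h) := by
  haveI : Fact p.Prime := ⟨hp⟩
  apply Finite.injective_iff_bijective.mp
  intro x y hxy
  have h0 : (x - y) ^ p ^ h = 0 := by
    rw [sub_pow_char_pow]
    simpa using sub_eq_zero.mpr hxy
  have := pow_eq_zero_iff (pow_ne_zero h hp.ne_zero) |>.mp h0
  exact sub_eq_zero.mp this

/-- If `f` maps injectively on `E` via `ψ` and `f - C (f.eval t)` splits in `E`, then
`f = C a * (X - C t)^n + C (f.eval t)`. -/
lemma aux_eq_C_mul_pow {F E : Type*} [Field F] [Field E] (ψ : F →+* E)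
    (f : F[X]) (hb : Function.Injective (fun c : E => (f.map ψ).eval c)) (t : F)
    (hsp : ((f - C (f.eval t)).map ψ).Splits) (hdeg : f.natDegree ≠ 0) :
    f = C f.leadingCoeff * (X - C t) ^ f.natDegree + C (f.eval t) := by
  set n := f.natDegree with hn
  set P := f - C (f.eval t) with hP
  have hPdeg : P.natDegree = n := natDegree_sub_C
  have hPne : P ≠ 0 := by
    intro h0
    rw [h0, natDegree_zero] at hPdeg
    exact hdeg hPdeg.symm
  have hPlc : P.leadingCoeff = f.leadingCoeff := by
    rw [leadingCoeff, leadingCoeff, hPdeg, ← hn, hP, coeff_sub, coeff_C,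
      if_neg hdeg, sub_zero]
  have hPme : P.map ψ ≠ 0 := (Polynomial.map_ne_zero_iff ψ.injective).mpr hPne
  have hsid : (P.map ψ).Splits := hsp
  have hcard : (P.map ψ).roots.card = n := by
    rw [← hPdeg]
    exact ((natDegree_map ψ).symm.trans hsp.natDegree_eq_card_roots).symm
  have hroots : ∀ r ∈ (P.map ψ).roots, r = ψ t := by
    intro r hr
    have hr0 : (P.map ψ).eval r = 0 := (mem_roots hPme).mp hr
    have hPm : P.map ψ = f.map ψ - C (ψ (f.eval t)) := by
      rw [hP, Polynomial.map_sub, map_C]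
    rw [hPm, eval_sub, eval_C, sub_eq_zero] at hr0
    have hevt : (f.map ψ).eval (ψ t) = ψ (f.eval t) := by
      rw [eval_map, eval₂_hom]
    exact hb (hr0.trans hevt.symm)
  have hrep : (P.map ψ).roots = Multiset.replicate n (ψ t) :=
    Multiset.eq_replicate.mpr ⟨hcard, hroots⟩
  have hprod := hsid.eq_prod_roots
  rw [hrep, Multiset.map_replicate, Multiset.prod_replicate, leadingCoeff_map, hPlc] at hprod
  have hmapeq : P.map ψ = (C f.leadingCoeff * (X - C t) ^ n).map ψ := by
    rw [hprod, Polynomial.map_mul, Polynomial.map_pow, Polynomial.map_sub, map_C, map_C, map_X]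
  have hPeq : P = C f.leadingCoeff * (X - C t) ^ n :=
    Polynomial.map_injective ψ ψ.injective hmapeq
  rw [hP] at hPeq
  linear_combination hPeq

theorem pp_of_all_extensions_iff {F : Type*} [Field F] [Fintype F] (f : F[X]) :
    (∀ (E : Type) [Field E] [Fintype E] [Algebra F E],
        Function.Bijective (fun c : E => (f.map (algebraMap F E)).eval c)) ↔
      ∃ (a b : F) (h : ℕ), a ≠ 0 ∧ f = C a * X ^ (ringChar F ^ h) + C b := by
  have hp : (ringChar F).Prime := CharP.char_is_prime F (ringChar F)
  constructor
  · intro H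
    -- Set up a universe-0 copy of F
    have hsmall : Small.{0} F := Countable.toSmall F
    set F₀ := Shrink.{0} F with hF₀
    haveI : Finite F₀ := Finite.of_equiv F (equivShrink F)
    haveI : Fintype F₀ := Fintype.ofFinite F₀
    let φ : F →+* F₀ := ((Shrink.ringEquiv F).symm : F ≃+* F₀)
    have hφinj : Function.Injective φ := (Shrink.ringEquiv F).symm.injective
    -- degree is nonzero
    have hdeg : f.natDegree ≠ 0 := by
      intro h0
      have hfC : f = C (f.coeff 0) := eq_C_of_natDegree_eq_zero h0
      letI : Algebra F F₀ := φ.toAlgebra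
      have hB := H F₀
      have h01 := hB.1 (a₁ := 0) (a₂ := 1) (by rw [hfC]; simp)
      exact zero_ne_one h01
    have hfne : f ≠ 0 := fun h0 => hdeg (by rw [h0, natDegree_zero])
    have ha : f.leadingCoeff ≠ 0 := leadingCoeff_ne_zero.mpr hfne
    set n := f.natDegree with hn
    set a := f.leadingCoeff with hadef
    -- the two auxiliary polynomials
    set P₀ := f - C (f.eval 0) with hP₀
    set P₁ := f - C (f.eval 1) with hP₁
    have hP₀ne : P₀ ≠ 0 := by
      intro h0
      have := natDegree_sub_C (p := f) (a := f.eval 0)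
      rw [← hP₀, h0, natDegree_zero] at this
      exact hdeg this.symm
    have hP₁ne : P₁ ≠ 0 := by
      intro h0
      have := natDegree_sub_C (p := f) (a := f.eval 1)
      rw [← hP₁, h0, natDegree_zero] at this
      exact hdeg this.symm
    -- splitting field
    set q : F₀[X] := (P₀ * P₁).map φ with hq
    set E := q.SplittingField with hE
    haveI : Finite E := Module.finite_of_finite (R := F₀)
    haveI : Fintype E := Fintype.ofFinite E
    letI : Algebra F E := ((algebraMap F₀ E).comp φ).toAlgebra
    have hψ : algebraMap F E = (algebraMap F₀ E).comp φ := rfl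
    set ψ := algebraMap F E with hψdef
    have hsplits : ((P₀ * P₁).map ψ).Splits := by
      have hs := SplittingField.splits q
      rw [hq, Polynomial.map_map] at hs
      rw [hψ]
      exact hs
    have hsp₀ : (P₀.map ψ).Splits := ((splits_mul (Polynomial.map_ne_zero hP₀ne) (Polynomial.map_ne_zero hP₁ne)).mp (by rwa [Polynomial.map_mul] at hsplits)).1
    have hsp₁ : (P₁.map ψ).Splits := ((splits_mul (Polynomial.map_ne_zero hP₀ne) (Polynomial.map_ne_zero hP₁ne)).mp (by rwa [Polynomial.map_mul] at hsplits)).2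
    have hbij := H E
    have hf0 := aux_eq_C_mul_pow ψ f hbij.1 0 hsp₀ hdeg
    have hf1 := aux_eq_C_mul_pow ψ f hbij.1 1 hsp₁ hdeg
    rw [map_zero, sub_zero] at hf0
    rw [← hn, ← hadef] at hf0 hf1
    have heq : C a * X ^ n + C (f.eval 0) = C a * (X - C 1) ^ n + C (f.eval 1) := by
      rw [← hf0, ← hf1]
    have hev1 : f.eval 1 = a + f.eval 0 := by
      have hev := congrArg (eval 1) heq
      simp only [eval_add, eval_mul, eval_pow, eval_sub, eval_X, eval_C, one_pow, mul_one,
        sub_self] at hev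
      rw [zero_pow (show n ≠ 0 from hdeg), mul_zero, zero_add] at hev
      exact hev.symm
    have hC : C (f.eval 1) = C a + C (f.eval 0) := by rw [hev1, map_add]
    have h2 : C a * (X - C 1 : F[X]) ^ n = C a * (X ^ n - 1) := by
      linear_combination -heq - hC
    have hkey : ((X : F[X]) - 1) ^ n = X ^ n - 1 := by
      have := mul_left_cancel₀ (show (C a : F[X]) ≠ 0 from C_ne_zero.mpr ha) h2
      rwa [C_1] at this
    obtain ⟨h, hnh⟩ := aux_pow_char (show n ≠ 0 from hdeg) hkey
    exact ⟨a, f.eval 0, h, ha, by rw [← hnh]; exact hf0⟩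
  · rintro ⟨a, b, h, ha, rfl⟩
    intro E _ _ _
    haveI : CharP F (ringChar F) := ringChar.charP F
    haveI : CharP E (ringChar F) :=
      charP_of_injective_algebraMap (algebraMap F E).injective (ringChar F)
    have hfrob := aux_frob_bij (E := E) hp h
    have hmul : Function.Bijective (fun c : E => algebraMap F E a * c) :=
      (mulLeft_bijective₀ _ (by simpa using (algebraMap F E).injective.ne ha))
    have hadd : Function.Bijective (fun c : E => c + algebraMap F E b) :=
      (Equiv.addRight (algebraMap F E b)).bijective
    have : (fun c : E => ((C a * X ^ ringChar F ^ h + C b).map (algebraMap F E)).eval c) =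
        (fun c : E => c + algebraMap F E b) ∘ (fun c : E => algebraMap F E a * c) ∘
          (fun c : E => c ^ ringChar F ^ h) := by
      funext c
      simp [Polynomial.map_add, Polynomial.map_mul, Polynomial.map_pow]
    rw [this]
    exact hadd.comp (hmul.comp hfrob)
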